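/- arXiv:1306.5154 — 4 statements merged into one kernel-verified Lean document; each statement's English description precedes it below -/
import Mathlib

section
/- The sum of the eccentricities of all vertices of the Fibonacci cube Γ_n equals (3F_n + 4nF_{n+1} + 3nF_n)/5, where F_k denotes the k-th Fibonacci number (F_0 = 0, F_1 = 1). -/
open Finset

/-- Number of positions where two binary strings differ. -/
def diffCount {n : ℕ} (u v : Fin n → Bool) : ℕ :=
  (Finset.univ.filter fun i => u i ≠ v i).card

/-- Fibonacci strings: binary strings with no two consecutive 1's. -/
def FibPred (n : ℕ) (v : Fin n → Bool) : Prop :=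
  ∀ i j : Fin n, (j : ℕ) = (i : ℕ) + 1 → ¬(v i = true ∧ v j = true)

instance (n : ℕ) : DecidablePred (FibPred n) := fun v => by
  unfold FibPred; infer_instance

/-- Vertices of the Fibonacci cube: Fibonacci strings of length n. -/
def FibV (n : ℕ) := {v : Fin n → Bool // FibPred n v}

instance (n : ℕ) : Fintype (FibV n) := Subtype.fintype _
instance (n : ℕ) : DecidableEq (FibV n) := Subtype.instDecidableEq

/-- The Fibonacci cube Γ_n: Fibonacci strings adjacent iff they differ in exactly one position. -/
def fibCube (n : ℕ) : SimpleGraph (FibV n) where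
  Adj u v := diffCount u.1 v.1 = 1
  symm := by
    constructor
    intro u v h
    have he : (Finset.univ.filter fun i => v.1 i ≠ u.1 i)
        = (Finset.univ.filter fun i => u.1 i ≠ v.1 i) := by
      apply Finset.filter_congr; intro i _; exact ne_comm
    simpa [diffCount, he] using h
  loopless := by constructor; intro u h; simp [diffCount] at h

instance (n : ℕ) : DecidableRel (fibCube n).Adj := fun u v => Nat.decEq _ _

/-- Eccentricity of a vertex in a finite graph: the maximum distance to any vertex. -/
noncomputable def gecc {V : Type*} [Fintype V] (G : SimpleGraph V) (u : V) : ℕ :=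
  Finset.univ.sup (G.dist u)

/-! ### Auxiliary list-level definitions -/

/-- No two consecutive `true`s, list version. -/
def FibL (l : List Bool) : Prop := l.IsChain (fun a b => ¬(a = true ∧ b = true))

instance : DecidablePred FibL := fun l => by unfold FibL; infer_instance

/-- Hamming distance of lists. -/
def hamm : List Bool → List Bool → ℕ
  | a :: l, b :: m => (if a = b then 0 else 1) + hamm l m
  | _, _ => 0

/-- Eccentricity formula (greedy value). -/
def eL : List Bool → ℕ
  | [] => 0
  | true :: l => 1 + eL l
  | [false] => 1
  | false :: true :: l => 2 + eL l
  | false :: false :: l => 1 + eL l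

theorem eL_false_bounds : ∀ l : List Bool, eL (false :: l) ≤ 1 + eL l ∧ eL l ≤ eL (false :: l)
  | [] => by simp [eL]
  | true :: l => by simp [eL]; omega
  | false :: l => by
      have h := eL_false_bounds l
      simp only [eL]
      omega

theorem hamm_le_eL : ∀ u v : List Bool, u.length = v.length → FibL v → hamm u v ≤ eL u
  | [], _, _, _ => by simp [hamm, eL]
  | true :: l, b :: v, hlen, hv => by
      have ih := hamm_le_eL l v (by simpa using hlen) hv.tail
      simp only [hamm, eL]
      split <;> omega
  | [false], [b], _, _ => by
      simp only [hamm, eL]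
      split <;> simp [hamm]
  | false :: true :: l, b :: c :: v, hlen, hv => by
      have ih := hamm_le_eL l v (by simpa using hlen) hv.tail.tail
      simp only [hamm, eL]
      split <;> split <;> omega
  | false :: false :: l, b :: c :: v, hlen, hv => by
      cases b with
      | true =>
          have hc : c = false := by
            have := List.isChain_cons_cons.mp hv
            cases c with
            | true => exact absurd ⟨rfl, rfl⟩ this.1
            | false => rfl
          subst hc
          have ih := hamm_le_eL l v (by simpa using hlen) hv.tail.tail
          simp only [hamm, eL]
          have := (eL_false_bounds l).2
          norm_num
          omega
      | false =>
          have ih := hamm_le_eL (false :: l) (c :: v) (by simpa using hlen) hv.tail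
          have hb := (eL_false_bounds l).1
          simp [hamm, eL] at ih ⊢
          omega
termination_by u => u.length

/-- Greedy farthest vertex. -/
def gld : List Bool → List Bool
  | [] => []
  | true :: l => false :: gld l
  | [false] => [true]
  | false :: _ :: l => true :: false :: gld l

theorem gld_length : ∀ l : List Bool, (gld l).length = l.length
  | [] => rfl
  | true :: l => by simp [gld, gld_length l]
  | [false] => rfl
  | false :: _ :: l => by simp [gld, gld_length l]

theorem gld_fib : ∀ l : List Bool, FibL (gld l)
  | [] => List.isChain_nil
  | true :: l => by
      have := gld_fib l
      unfold FibL at *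
      rw [gld, List.isChain_cons]
      exact ⟨fun b _ => by simp, this⟩
  | [false] => by simp [gld, FibL]
  | false :: _ :: l => by
      have := gld_fib l
      unfold FibL at *
      rw [gld, List.isChain_cons, List.isChain_cons]
      refine ⟨?_, fun b _ => by simp, this⟩
      intro b hb
      simp only [List.head?_cons, Option.mem_def, Option.some.injEq] at hb
      simp [← hb]

theorem hamm_gld : ∀ l : List Bool, hamm l (gld l) = eL l
  | [] => rfl
  | true :: l => by simp [gld, hamm, eL, hamm_gld l]
  | [false] => by simp [gld, hamm, eL]
  | false :: true :: l => by simp [gld, hamm, eL, hamm_gld l]; omega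
  | false :: false :: l => by simp [gld, hamm, eL, hamm_gld l]

/-! ### Bridges between `Fin n → Bool` and lists -/

theorem diffCount_eq_sum {n : ℕ} (u v : Fin n → Bool) :
    diffCount u v = ∑ i : Fin n, if u i = v i then 0 else 1 := by
  rw [diffCount, Finset.card_filter]
  refine Finset.sum_congr rfl fun i _ => ?_
  by_cases h : u i = v i <;> simp [h]

theorem diffCount_eq_hamm : ∀ {n : ℕ} (u v : Fin n → Bool),
    diffCount u v = hamm (List.ofFn u) (List.ofFn v)
  | 0, u, v => by simp [diffCount, hamm, List.ofFn_zero]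
  | n + 1, u, v => by
      rw [diffCount_eq_sum, Fin.sum_univ_succ, List.ofFn_succ, List.ofFn_succ, hamm,
        ← diffCount_eq_sum, diffCount_eq_hamm]

theorem fibPred_iff_fibL {n : ℕ} (u : Fin n → Bool) :
    FibPred n u ↔ FibL (List.ofFn u) := by
  rw [FibL, List.isChain_iff_getElem]
  constructor
  · intro h i hi
    simp only [List.length_ofFn] at hi
    simp only [List.getElem_ofFn]
    exact h ⟨i, by omega⟩ ⟨i + 1, by omega⟩ rfl
  · intro h i j hij
    have hjn := j.isLt
    have hlt : (i : ℕ) < (List.ofFn u).length - 1 := by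
      simp only [List.length_ofFn]; omega
    have h' := h i (by omega)
    simp only [List.getElem_ofFn] at h'
    have hj : j = ⟨(i : ℕ) + 1, by omega⟩ := Fin.ext hij
    rw [hj]
    exact h'

/-! ### Distance equals Hamming distance -/

theorem diffCount_triangle {n : ℕ} (a b c : Fin n → Bool) :
    diffCount a c ≤ diffCount a b + diffCount b c := by
  unfold diffCount
  calc (Finset.univ.filter fun i => a i ≠ c i).card
      ≤ ((Finset.univ.filter fun i => a i ≠ b i) ∪ (Finset.univ.filter fun i => b i ≠ c i)).card := by
        apply Finset.card_le_card
        intro i hi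
        simp only [Finset.mem_filter, Finset.mem_union, Finset.mem_univ, true_and] at *
        by_contra hcon
        push_neg at hcon
        exact hi (hcon.1.trans hcon.2)
    _ ≤ _ := Finset.card_union_le _ _

theorem diffCount_le_walk_length {n : ℕ} {u v : FibV n} (p : (fibCube n).Walk u v) :
    diffCount u.1 v.1 ≤ p.length := by
  induction p with
  | nil => simp [diffCount]
  | @cons a b c h p ih =>
      refine le_trans (diffCount_triangle a.1 b.1 c.1) ?_
      rw [SimpleGraph.Walk.length_cons]
      have hab : diffCount a.1 b.1 = 1 := h
      omega

theorem fibPred_update_false {n : ℕ} {u : Fin n → Bool} (hu : FibPred n u) (i : Fin n) :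
    FibPred n (Function.update u i false) := by
  intro a b hab ⟨ha, hb⟩
  apply hu a b hab
  constructor
  · by_cases h : a = i
    · subst h; simp [Function.update_self] at ha
    · rwa [Function.update_of_ne h] at ha
  · by_cases h : b = i
    · subst h; simp [Function.update_self] at hb
    · rwa [Function.update_of_ne h] at hb

theorem exists_walk_aux {n : ℕ} : ∀ (d : ℕ) (u v : FibV n), diffCount u.1 v.1 = d →
    ∃ p : (fibCube n).Walk u v, p.length = d := by
  intro d
  induction d with
  | zero =>
      intro u v h
      have : u = v := by
        apply Subtype.ext; funext i
        by_contra hne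
        have : i ∈ Finset.univ.filter fun i => u.1 i ≠ v.1 i := by simp [hne]
        rw [diffCount, Finset.card_eq_zero] at h
        simp [h] at this
      subst this
      exact ⟨SimpleGraph.Walk.nil, rfl⟩
  | succ d ih =>
      intro u v h
      have hne : (Finset.univ.filter fun i => u.1 i ≠ v.1 i).Nonempty := by
        rw [← Finset.card_pos, ← diffCount, h]; omega
      have key : ∃ i : Fin n, u.1 i ≠ v.1 i ∧ FibPred n (Function.update u.1 i (v.1 i)) := by
        by_cases hc : ∃ i : Fin n, u.1 i = true ∧ u.1 i ≠ v.1 i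
        · obtain ⟨i, hi1, hi2⟩ := hc
          refine ⟨i, hi2, ?_⟩
          have hv : v.1 i = false := by
            cases hvi : v.1 i
            · rfl
            · exact absurd (hi1.trans hvi.symm) hi2
          rw [hv]
          exact fibPred_update_false u.2 i
        · push_neg at hc
          obtain ⟨i, hi⟩ := hne
          simp only [Finset.mem_filter, Finset.mem_univ, true_and] at hi
          have hui : u.1 i = false := by
            cases hu : u.1 i
            · rfl
            · exact absurd hi (by simpa using hc i hu)
          have hvi : v.1 i = true := by
            cases hv : v.1 i
            · rw [hui, hv] at hi; exact absurd rfl hi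
            · rfl
          refine ⟨i, hi, ?_⟩
          intro a b hab ⟨ha, hb⟩
          by_cases hai : a = i
          · subst hai
            have hbi : b ≠ a := by
              intro hba; subst hba; omega
            rw [Function.update_of_ne hbi] at hb
            have hvb : v.1 b = false := by
              cases hvb : v.1 b
              · rfl
              · exact absurd ⟨hvi, hvb⟩ (v.2 a b hab)
            have := hc b hb
            rw [hvb, hb] at this
            simp at this
          · rw [Function.update_of_ne hai] at ha
            by_cases hbi : b = i
            · subst hbi
              have hva : v.1 a = false := by
                cases hva : v.1 a
                · rfl
                · exact absurd ⟨hva, hvi⟩ (v.2 a b hab)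
              have := hc a ha
              rw [hva, ha] at this
              simp at this
            · rw [Function.update_of_ne hbi] at hb
              exact u.2 a b hab ⟨ha, hb⟩
      obtain ⟨i, hi, hfib⟩ := key
      have hadj : (fibCube n).Adj u ⟨Function.update u.1 i (v.1 i), hfib⟩ := by
        show diffCount u.1 (Function.update u.1 i (v.1 i)) = 1
        rw [diffCount, Finset.card_eq_one]
        refine ⟨i, ?_⟩
        ext j
        simp only [Finset.mem_filter, Finset.mem_univ, true_and, Finset.mem_singleton]
        constructor
        · intro hj
          by_contra hji
          rw [Function.update_of_ne hji] at hj
          exact hj rfl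
        · intro hj; subst hj
          rw [Function.update_self]
          exact hi
      have hd : diffCount (Function.update u.1 i (v.1 i)) v.1 = d := by
        have hset : (Finset.univ.filter fun j => Function.update u.1 i (v.1 i) j ≠ v.1 j)
            = (Finset.univ.filter fun j => u.1 j ≠ v.1 j).erase i := by
          ext j
          simp only [Finset.mem_filter, Finset.mem_univ, true_and, Finset.mem_erase]
          constructor
          · intro hj
            have hji : j ≠ i := by
              intro hh; subst hh
              rw [Function.update_self] at hj
              exact hj rfl
            rw [Function.update_of_ne hji] at hj
            exact ⟨hji, hj⟩
          · intro ⟨hji, hj⟩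
            rw [Function.update_of_ne hji]
            exact hj
        rw [diffCount, hset, Finset.card_erase_of_mem (by simp [hi]), ← diffCount, h]
        omega
      obtain ⟨p, hp⟩ := ih ⟨Function.update u.1 i (v.1 i), hfib⟩ v hd
      exact ⟨SimpleGraph.Walk.cons hadj p, (SimpleGraph.Walk.length_cons hadj p).trans (congrArg (· + 1) hp)⟩

theorem dist_eq_diffCount {n : ℕ} (u v : FibV n) :
    (fibCube n).dist u v = diffCount u.1 v.1 := by
  obtain ⟨p, hp⟩ := exists_walk_aux (diffCount u.1 v.1) u v rfl
  have h1 : (fibCube n).dist u v ≤ diffCount u.1 v.1 := hp ▸ SimpleGraph.dist_le p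
  have hr : (fibCube n).Reachable u v := ⟨p⟩
  obtain ⟨q, hq⟩ := hr.exists_walk_length_eq_dist
  have h2 : diffCount u.1 v.1 ≤ (fibCube n).dist u v := hq ▸ diffCount_le_walk_length q
  omega

theorem ofFn_get_cast {n : ℕ} (l : List Bool) (h : l.length = n) :
    List.ofFn (fun i : Fin n => l.get (Fin.cast h.symm i)) = l := by
  subst h
  simpa using List.ofFn_get l

theorem gecc_eq {n : ℕ} (u : FibV n) : gecc (fibCube n) u = eL (List.ofFn u.1) := by
  apply le_antisymm
  · apply Finset.sup_le
    intro v _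
    rw [dist_eq_diffCount, diffCount_eq_hamm]
    exact hamm_le_eL _ _ (by simp) ((fibPred_iff_fibL v.1).mp v.2)
  · have hlen : (gld (List.ofFn u.1)).length = n := by rw [gld_length]; simp
    have hofn := ofFn_get_cast (gld (List.ofFn u.1)) hlen
    have hw : FibPred n (fun i : Fin n => (gld (List.ofFn u.1)).get (Fin.cast hlen.symm i)) :=
      (fibPred_iff_fibL _).mpr (by rw [hofn]; exact gld_fib _)
    have hdist : (fibCube n).dist u ⟨_, hw⟩ = eL (List.ofFn u.1) := by
      refine (dist_eq_diffCount _ _).trans ((diffCount_eq_hamm _ _).trans ?_)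
      show hamm (List.ofFn u.1) (List.ofFn fun i => (gld (List.ofFn u.1)).get (Fin.cast hlen.symm i)) = _
      rw [hofn, hamm_gld]
    rw [← hdist]
    exact Finset.le_sup (Finset.mem_univ _)

/-! ### The finset of Fibonacci lists -/

def Lf : ℕ → Finset (List Bool)
  | 0 => {[]}
  | 1 => {[false], [true]}
  | (n + 2) => ((Lf (n + 1)).image (false :: ·)) ∪ ((Lf n).image (fun l => true :: false :: l))

theorem mem_Lf : ∀ (n : ℕ) (l : List Bool), l ∈ Lf n ↔ l.length = n ∧ FibL l := by
  intro n
  induction n using Nat.strong_induction_on with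
  | _ n ih =>
    match n with
    | 0 => intro l; simp [Lf, FibL]; rintro rfl; simp
    | 1 =>
        intro l
        simp only [Lf, Finset.mem_insert, Finset.mem_singleton]
        constructor
        · rintro (rfl | rfl) <;> simp [FibL]
        · rintro ⟨hl, -⟩
          match l with
          | [b] => cases b <;> simp
    | (n + 2) =>
        intro l
        simp only [Lf, Finset.mem_union, Finset.mem_image]
        constructor
        · rintro (⟨m, hm, rfl⟩ | ⟨m, hm, rfl⟩)
          · obtain ⟨h1, h2⟩ := (ih (n + 1) (by omega) m).mp hm
            refine ⟨by simp [h1], ?_⟩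
            rw [FibL, List.isChain_cons]
            exact ⟨fun b _ => by simp, h2⟩
          · obtain ⟨h1, h2⟩ := (ih n (by omega) m).mp hm
            refine ⟨by simp [h1], ?_⟩
            rw [FibL, List.isChain_cons, List.isChain_cons]
            refine ⟨?_, fun b _ => by simp, h2⟩
            intro b hb
            simp only [List.head?_cons, Option.mem_def, Option.some.injEq] at hb
            simp [← hb]
        · rintro ⟨hlen, hfib⟩
          match l with
          | a :: b :: m =>
            cases a with
            | false =>
                left
                refine ⟨b :: m, (ih (n + 1) (by omega) _).mpr ⟨by simpa using hlen, hfib.tail⟩, rfl⟩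
            | true =>
                right
                have hb : b = false := by
                  have := (List.isChain_cons_cons.mp hfib).1
                  cases b
                  · rfl
                  · exact absurd ⟨rfl, rfl⟩ this
                subst hb
                exact ⟨m, (ih n (by omega) _).mpr ⟨by simpa using hlen, hfib.tail.tail⟩, rfl⟩

theorem sum_fibV_eq_sum_Lf {n : ℕ} (F : List Bool → ℕ) :
    ∑ u : FibV n, F (List.ofFn u.1) = ∑ l ∈ Lf n, F l := by
  apply Finset.sum_bij (fun (u : FibV n) _ => List.ofFn u.1)
  · intro u _
    exact (mem_Lf n _).mpr ⟨by simp, (fibPred_iff_fibL u.1).mp u.2⟩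
  · intro a _ b _ hab
    apply Subtype.ext
    exact List.ofFn_injective hab
  · intro l hl
    obtain ⟨hlen, hfib⟩ := (mem_Lf n l).mp hl
    refine ⟨⟨fun i => l.get (Fin.cast hlen.symm i), ?_⟩, Finset.mem_univ _, ?_⟩
    · exact (fibPred_iff_fibL _).mpr (by rw [ofFn_get_cast l hlen]; exact hfib)
    · exact ofFn_get_cast l hlen
  · intro u _
    rfl

/-! ### Sum recursions -/

theorem sum_Lf_rec (n : ℕ) (F : List Bool → ℕ) :
    ∑ l ∈ Lf (n + 2), F l
      = ∑ l ∈ Lf (n + 1), F (false :: l) + ∑ l ∈ Lf n, F (true :: false :: l) := by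
  rw [show Lf (n + 2) = ((Lf (n + 1)).image (false :: ·)) ∪ ((Lf n).image (fun l => true :: false :: l)) from rfl]
  rw [Finset.sum_union, Finset.sum_image, Finset.sum_image]
  · intro a _ b _ h; simpa using h
  · intro a _ b _ h; simpa using h
  · rw [Finset.disjoint_left]
    rintro l hl hl'
    simp only [Finset.mem_image] at hl hl'
    obtain ⟨m, _, rfl⟩ := hl
    obtain ⟨m', _, h⟩ := hl'
    simp at h

def Sseq (n : ℕ) : ℕ := ∑ l ∈ Lf n, eL l
def Tseq (n : ℕ) : ℕ := ∑ l ∈ Lf n, eL (false :: l)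

theorem card_Lf_rec (n : ℕ) : (Lf (n + 2)).card = (Lf (n + 1)).card + (Lf n).card := by
  rw [Finset.card_eq_sum_ones, Finset.card_eq_sum_ones, Finset.card_eq_sum_ones]
  exact sum_Lf_rec n (fun _ => 1)

theorem Sseq_rec (n : ℕ) : Sseq (n + 2) = Tseq (n + 1) + ((Lf n).card + Tseq n) := by
  rw [Sseq, sum_Lf_rec n eL]
  congr 1
  have : ∀ l : List Bool, eL (true :: false :: l) = 1 + eL (false :: l) := fun l => rfl
  simp only [this]
  rw [Finset.sum_add_distrib, Finset.card_eq_sum_ones]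
  rfl

theorem Tseq_rec (n : ℕ) :
    Tseq (n + 2) = ((Lf (n + 1)).card + Sseq (n + 1)) + (2 * (Lf n).card + Tseq n) := by
  rw [Tseq, sum_Lf_rec n (fun l => eL (false :: l))]
  congr 1
  · have : ∀ l : List Bool, eL (false :: false :: l) = 1 + eL l := fun l => rfl
    simp only [this]
    rw [Finset.sum_add_distrib, Finset.card_eq_sum_ones]
    rfl
  · have : ∀ l : List Bool, eL (false :: true :: false :: l) = 2 + eL (false :: l) := fun l => rfl
    simp only [this]
    rw [Finset.sum_add_distrib, Finset.sum_const, Finset.card_eq_sum_ones]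
    simp [mul_comm, Finset.mul_sum]
    rfl

def Pprop (n : ℕ) : Prop :=
  (Lf n).card = Nat.fib (n + 2) ∧
  5 * Sseq n = 3 * Nat.fib n + 4 * n * Nat.fib (n + 1) + 3 * n * Nat.fib n ∧
  5 * Tseq n = 5 * Nat.fib (n + 1) + 3 * Nat.fib n + 4 * n * Nat.fib (n + 1) + 3 * n * Nat.fib n

theorem Pprop_all : ∀ n, Pprop n ∧ Pprop (n + 1) := by
  intro n
  induction n with
  | zero =>
      constructor
      · refine ⟨by decide, by decide, by decide⟩
      · refine ⟨by decide, by decide, by decide⟩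
  | succ n ih =>
      obtain ⟨⟨hC0, hS0, hT0⟩, h1⟩ := ih
      obtain ⟨hC1, hS1, hT1⟩ := h1
      refine ⟨⟨hC1, hS1, hT1⟩, ?_, ?_, ?_⟩
      · rw [card_Lf_rec, hC0, hC1]
        simp [Nat.fib_add_two]
        ring
      · have : 5 * Sseq (n + 2) = 5 * Tseq (n + 1) + (5 * (Lf n).card + 5 * Tseq n) := by
          rw [Sseq_rec, Nat.mul_add, Nat.mul_add]
        rw [this, hT1, hC0, hT0]
        simp only [Nat.fib_add_two]
        ring
      · have : 5 * Tseq (n + 2)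
            = (5 * (Lf (n + 1)).card + 5 * Sseq (n + 1)) + (5 * (2 * (Lf n).card) + 5 * Tseq n) := by
          rw [Tseq_rec, Nat.mul_add, Nat.mul_add, Nat.mul_add]
        rw [this, hC1, hS1, hC0, hT0]
        simp only [Nat.fib_add_two]
        ring

/-- The sum of the eccentricities of all vertices of the Fibonacci cube Γ_n equals
(3F_n + 4nF_{n+1} + 3nF_n)/5. -/
theorem sum_ecc_fibCube (n : ℕ) :
    ∑ u : FibV n, gecc (fibCube n) u =
      (3 * Nat.fib n + 4 * n * Nat.fib (n + 1) + 3 * n * Nat.fib n) / 5 := by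
  have h1 : ∑ u : FibV n, gecc (fibCube n) u = Sseq n := by
    rw [Sseq, ← sum_fibV_eq_sum_Lf eL]
    exact Finset.sum_congr rfl fun u _ => gecc_eq u
  have h2 := (Pprop_all n).1.2.1
  rw [h1, ← h2, Nat.mul_div_cancel_left _ (by norm_num)]
end

section
/- If {a_n} is a convergent sequence of complex numbers with limit ℓ, then (1/n) Σ_{i=1}^{n} a_i · a_{n+1-i} converges to ℓ² as n → ∞. -/
open Filter Finset

/-- reflection of a sum over `Icc 1 n`. -/
lemma refl_sum (g : ℕ → ℂ) (n : ℕ) :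
    ∑ i ∈ Finset.Icc 1 n, g (n + 1 - i) = ∑ i ∈ Finset.Icc 1 n, g i := by
  apply Finset.sum_nbij' (fun i => n + 1 - i) (fun i => n + 1 - i) <;>
    intro i hi <;> simp only [Finset.mem_Icc] at * <;> omega

/-- shifting a sum over `range n` to `Icc 1 n`. -/
lemma sum_shift {M : Type*} [AddCommMonoid M] (g : ℕ → M) (n : ℕ) :
    ∑ i ∈ Finset.range n, g (i + 1) = ∑ i ∈ Finset.Icc 1 n, g i := by
  apply Finset.sum_nbij' (fun i => i + 1) (fun i => i - 1) <;>
    intro i hi <;> simp only [Finset.mem_range, Finset.mem_Icc] at * <;> omega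

/-- Cesàro for complex sequence tending to 0, over `Icc 1 n`. -/
lemma cesaro_Icc (b : ℕ → ℂ) (hb : Filter.Tendsto b Filter.atTop (nhds 0)) :
    Filter.Tendsto (fun n : ℕ => (1 / (n : ℂ)) * ∑ i ∈ Finset.Icc 1 n, b i)
      Filter.atTop (nhds 0) := by
  have h := (hb.comp (tendsto_add_atTop_nat 1)).cesaro_smul
  refine h.congr fun n => ?_
  rw [show ((b ∘ fun a => a + 1) = fun i => b (i + 1)) from rfl, sum_shift]
  simp [Complex.real_smul, div_eq_inv_mul]

/-- Cesàro for real sequence tending to 0, over `Icc 1 n`. -/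
lemma cesaro_Icc_real (b : ℕ → ℝ) (hb : Filter.Tendsto b Filter.atTop (nhds 0)) :
    Filter.Tendsto (fun n : ℕ => ((n : ℝ))⁻¹ * ∑ i ∈ Finset.Icc 1 n, b i)
      Filter.atTop (nhds 0) := by
  have h := (hb.comp (tendsto_add_atTop_nat 1)).cesaro
  refine h.congr fun n => ?_
  rw [show ((b ∘ fun a => a + 1) = fun i => b (i + 1)) from rfl, sum_shift]

/-- If {a_n} is a convergent complex sequence with limit ℓ, then
(1/n) Σ_{i=1}^n a_i a_{n+1-i} converges to ℓ². -/
theorem cesaro_product (a : ℕ → ℂ) (ℓ : ℂ) (ha : Filter.Tendsto a Filter.atTop (nhds ℓ)) :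
    Filter.Tendsto (fun n : ℕ => (1 / (n : ℂ)) * ∑ i ∈ Finset.Icc 1 n, a i * a (n + 1 - i))
      Filter.atTop (nhds (ℓ ^ 2)) := by
  set b : ℕ → ℂ := fun n => a n - ℓ with hbdef
  have hb : Filter.Tendsto b Filter.atTop (nhds 0) := by
    simpa using ha.sub_const ℓ
  -- bound on b
  obtain ⟨M, hM⟩ : ∃ M : ℝ, ∀ n, ‖b n‖ ≤ M := by
    obtain ⟨M, hM⟩ := hb.norm.bddAbove_range
    exact ⟨M, fun n => hM ⟨n, rfl⟩⟩
  have hM0 : 0 ≤ M := le_trans (norm_nonneg _) (hM 0)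
  -- Cesàro term
  have hc : Filter.Tendsto (fun n : ℕ => (1 / (n : ℂ)) * ∑ i ∈ Finset.Icc 1 n, b i)
      Filter.atTop (nhds 0) := cesaro_Icc b hb
  -- product term
  have hp : Filter.Tendsto
      (fun n : ℕ => (1 / (n : ℂ)) * ∑ i ∈ Finset.Icc 1 n, b i * b (n + 1 - i))
      Filter.atTop (nhds 0) := by
    have hrc : Filter.Tendsto
        (fun n : ℕ => M * (((n : ℝ))⁻¹ * ∑ i ∈ Finset.Icc 1 n, ‖b i‖))
        Filter.atTop (nhds 0) := by
      have := (cesaro_Icc_real (fun i => ‖b i‖) (by simpa using hb.norm)).const_mul M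
      simpa using this
    refine squeeze_zero_norm (fun n => ?_) hrc
    have h1 : ‖∑ i ∈ Finset.Icc 1 n, b i * b (n + 1 - i)‖
        ≤ ∑ i ∈ Finset.Icc 1 n, M * ‖b i‖ := by
      refine le_trans (norm_sum_le _ _) (Finset.sum_le_sum fun i _ => ?_)
      rw [norm_mul, mul_comm M]
      exact mul_le_mul_of_nonneg_left (hM _) (norm_nonneg _)
    calc ‖(1 / (n : ℂ)) * ∑ i ∈ Finset.Icc 1 n, b i * b (n + 1 - i)‖
        = ((n : ℝ))⁻¹ * ‖∑ i ∈ Finset.Icc 1 n, b i * b (n + 1 - i)‖ := by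
          rw [norm_mul]; norm_num
      _ ≤ ((n : ℝ))⁻¹ * ∑ i ∈ Finset.Icc 1 n, M * ‖b i‖ := by
          exact mul_le_mul_of_nonneg_left h1 (by positivity)
      _ = M * (((n : ℝ))⁻¹ * ∑ i ∈ Finset.Icc 1 n, ‖b i‖) := by
          rw [← Finset.mul_sum]; ring
  -- combine
  have hmain : Filter.Tendsto
      (fun n : ℕ => ℓ ^ 2 + 2 * ℓ * ((1 / (n : ℂ)) * ∑ i ∈ Finset.Icc 1 n, b i)
        + (1 / (n : ℂ)) * ∑ i ∈ Finset.Icc 1 n, b i * b (n + 1 - i))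
      Filter.atTop (nhds (ℓ ^ 2)) := by
    have := ((hc.const_mul (2 * ℓ)).const_add (ℓ ^ 2)).add hp
    simpa using this
  refine hmain.congr' ?_
  filter_upwards [Filter.eventually_ge_atTop 1] with n hn
  have hn0 : (n : ℂ) ≠ 0 := Nat.cast_ne_zero.mpr (by omega)
  have expand : ∀ i ∈ Finset.Icc 1 n, a i * a (n + 1 - i)
      = b i * b (n + 1 - i) + ℓ * b i + ℓ * b (n + 1 - i) + ℓ ^ 2 := by
    intro i _; simp only [hbdef]; ring
  rw [Finset.sum_congr rfl expand, Finset.sum_add_distrib, Finset.sum_add_distrib,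
    Finset.sum_add_distrib, ← Finset.mul_sum, ← Finset.mul_sum, refl_sum b n,
    Finset.sum_const, Nat.card_Icc, Nat.add_sub_cancel, nsmul_eq_mul]
  field_simp
  ring
end

section
/- The number of edges of the Lucas cube Λ_n equals nF_{n-1} for n ≥ 1, where F_k denotes the Fibonacci numbers. -/
open Finset

/-- Lucas strings: binary strings with no two cyclically consecutive 1's. -/
def LucasPred (n : ℕ) (v : Fin n → Bool) : Prop :=
  ∀ i j : Fin n, (j : ℕ) = ((i : ℕ) + 1) % n → ¬(v i = true ∧ v j = true)

instance (n : ℕ) : DecidablePred (LucasPred n) := fun v => by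
  unfold LucasPred; infer_instance

/-- Vertices of the Lucas cube: Lucas strings of length n. -/
def LucasV (n : ℕ) := {v : Fin n → Bool // LucasPred n v}

instance (n : ℕ) : Fintype (LucasV n) := Subtype.fintype _
instance (n : ℕ) : DecidableEq (LucasV n) := Subtype.instDecidableEq

/-- The Lucas cube Λ_n: Lucas strings adjacent iff they differ in exactly one position. -/
def lucasCube (n : ℕ) : SimpleGraph (LucasV n) where
  Adj u v := diffCount u.1 v.1 = 1
  symm := by
    constructor
    intro u v h
    have he : (Finset.univ.filter fun i => v.1 i ≠ u.1 i)
        = (Finset.univ.filter fun i => u.1 i ≠ v.1 i) := by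
      apply Finset.filter_congr; intro i _; exact ne_comm
    simpa [diffCount, he] using h
  loopless := by constructor; intro u h; simp [diffCount] at h

instance (n : ℕ) : DecidableRel (lucasCube n).Adj := fun u v => Nat.decEq _ _

lemma fibPred_iff (m : ℕ) (v : Fin m → Bool) :
    FibPred m v ↔ ∀ k (h : k + 1 < m), ¬(v ⟨k, Nat.lt_of_succ_lt h⟩ = true ∧ v ⟨k+1, h⟩ = true) := by
  constructor
  · intro H k h
    exact H ⟨k, Nat.lt_of_succ_lt h⟩ ⟨k+1, h⟩ rfl
  · intro H i j hij
    have h : (i : ℕ) + 1 < m := hij ▸ j.2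
    have hi : i = ⟨(i:ℕ), Nat.lt_of_succ_lt h⟩ := by ext; rfl
    have hj : j = ⟨(i:ℕ)+1, h⟩ := by ext; exact hij
    rw [hi, hj]; exact H (i:ℕ) h

lemma fibAux1 (k : ℕ) : ((univ : Finset (Fin (k+2) → Bool)).filter
      (fun v => FibPred (k+2) v ∧ v ⟨k+1, Nat.lt_succ_self (k+1)⟩ = false)).card
    = ((univ : Finset (Fin (k+1) → Bool)).filter (FibPred (k+1))).card := by
  have hlast := Nat.lt_succ_self (k+1)
  apply Finset.card_nbij' (i := fun v (j : Fin (k+1)) => v j.castSucc)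
    (j := fun w (i : Fin (k+2)) => if h : (i:ℕ) < k+1 then w ⟨(i:ℕ), h⟩ else false)
  · intro v hv
    simp only [Finset.mem_coe, Finset.mem_filter, Finset.mem_univ, true_and] at hv ⊢
    rw [fibPred_iff] at hv ⊢
    intro a ha
    exact hv.1 a (Nat.lt_succ_of_lt ha)
  · intro w hw
    simp only [Finset.mem_coe, Finset.mem_filter, Finset.mem_univ, true_and] at hw ⊢
    rw [fibPred_iff] at hw
    refine ⟨?_, by simp⟩
    rw [fibPred_iff]
    intro a ha
    by_cases h : a + 1 < k + 1
    · simpa [Nat.lt_of_succ_lt h, h] using hw a h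
    · rintro ⟨-, hb⟩
      simp only [dif_neg (show ¬ ((a:ℕ)+1 < k+1) from h)] at hb
      exact Bool.false_ne_true hb
  · intro v hv
    simp only [Finset.mem_coe, Finset.mem_filter, Finset.mem_univ, true_and] at hv
    funext i
    by_cases h : (i:ℕ) < k + 1
    · simp only [dif_pos h]
      have hc : Fin.castSucc ⟨(i:ℕ), h⟩ = i := by ext; simp
      rw [hc]
    · have hik : i = ⟨k+1, hlast⟩ := Fin.ext (by
        show (i:ℕ) = k+1
        have := i.2
        omega)
      rw [hik, hv.2]
      simp
  · intro w hw
    funext j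
    simp [j.2]

lemma fibAux2 (k : ℕ) : ((univ : Finset (Fin (k+2) → Bool)).filter
      (fun v => FibPred (k+2) v ∧ v ⟨k+1, Nat.lt_succ_self (k+1)⟩ = true)).card
    = ((univ : Finset (Fin k → Bool)).filter (FibPred k)).card := by
  have hlast := Nat.lt_succ_self (k+1)
  apply Finset.card_nbij' (i := fun v (j : Fin k) => v j.castSucc.castSucc)
    (j := fun w (i : Fin (k+2)) =>
      if h : (i:ℕ) < k then w ⟨(i:ℕ), h⟩ else if (i:ℕ) = k then false else true)
  · intro v hv
    simp only [Finset.mem_coe, Finset.mem_filter, Finset.mem_univ, true_and] at hv ⊢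
    rw [fibPred_iff] at hv ⊢
    intro a ha
    exact hv.1 a (Nat.lt_succ_of_lt (Nat.lt_succ_of_lt ha))
  · intro w hw
    simp only [Finset.mem_coe, Finset.mem_filter, Finset.mem_univ, true_and] at hw ⊢
    rw [fibPred_iff] at hw
    constructor
    · rw [fibPred_iff]
      intro a ha
      by_cases h : a + 1 < k
      · simpa [Nat.lt_of_succ_lt h, h] using hw a h
      · by_cases h' : a + 1 = k
        · rintro ⟨-, hb⟩
          simp only [dif_neg (show ¬ ((a:ℕ)+1 < k) from h), if_pos h'] at hb
          exact Bool.false_ne_true hb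
        · have ha' : a = k := by omega
          rintro ⟨hb, -⟩
          simp only [ha', dif_neg (lt_irrefl k), if_pos rfl] at hb
          exact Bool.false_ne_true hb
    · have hA : ¬ ((k:ℕ)+1 < k) := by omega
      have hB : ¬ ((k:ℕ)+1 = k) := by omega
      simp [hA, hB]
  · intro v hv
    simp only [Finset.mem_coe, Finset.mem_filter, Finset.mem_univ, true_and] at hv
    have hkk : (k:ℕ) < k + 2 := Nat.lt_succ_of_lt (Nat.lt_succ_self k)
    have hvk : v ⟨k, hkk⟩ = false := by
      by_contra hcon
      have h' : v ⟨k, hkk⟩ = true := by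
        cases hb : v ⟨k, hkk⟩
        · exact absurd hb hcon
        · rfl
      exact (fibPred_iff _ _ |>.1 hv.1) k hlast ⟨h', hv.2⟩
    funext i
    by_cases h : (i:ℕ) < k
    · simp only [dif_pos h]
      have hc : Fin.castSucc (Fin.castSucc ⟨(i:ℕ), h⟩) = i := by ext; simp
      rw [hc]
    · by_cases h' : (i:ℕ) = k
      · have hik : i = ⟨k, hkk⟩ := by ext; exact h'
        rw [hik, hvk]
        simp
      · have hik : i = ⟨k+1, hlast⟩ := Fin.ext (by
          show (i:ℕ) = k+1
          have := i.2
          omega)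
        rw [hik, hv.2]
        have hk1 : ¬ ((k:ℕ)+1 < k) := by omega
        have hk2 : ¬ ((k:ℕ)+1 = k) := by omega
        simp [hk1, hk2]
  · intro w hw
    funext j
    have hj : ((j:ℕ)) < k := j.2
    simp [hj]

lemma fibCount : ∀ m : ℕ, ((univ : Finset (Fin m → Bool)).filter (FibPred m)).card = Nat.fib (m+2) := by
  intro m
  induction m using Nat.twoStepInduction with
  | zero => decide
  | one => decide
  | more k ihk ihk1 =>
      have hsplit : ((univ : Finset (Fin (k+2) → Bool)).filter (FibPred (k+2))).card
          = ((univ : Finset (Fin (k+2) → Bool)).filter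
              (fun v => FibPred (k+2) v ∧ v ⟨k+1, Nat.lt_succ_self (k+1)⟩ = false)).card
          + ((univ : Finset (Fin (k+2) → Bool)).filter
              (fun v => FibPred (k+2) v ∧ v ⟨k+1, Nat.lt_succ_self (k+1)⟩ = true)).card := by
        have := Finset.card_filter_add_card_filter_not
          (s := (univ : Finset (Fin (k+2) → Bool)).filter (FibPred (k+2)))
          (p := fun v => v ⟨k+1, Nat.lt_succ_self (k+1)⟩ = false)
        rw [Finset.filter_filter, Finset.filter_filter] at this
        simp only [Bool.not_eq_false] at this
        exact this.symm
      rw [hsplit, fibAux1 k, fibAux2 k, ihk1, ihk]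
      show Nat.fib (k+3) + Nat.fib (k+2) = Nat.fib (k+4)
      exact (Nat.add_comm _ _).trans (Nat.fib_add_two).symm
lemma lucasPred_of {n : ℕ} (v : Fin n → Bool)
    (H : ∀ a (ha : a < n), ¬(v ⟨a, ha⟩ = true ∧
      v ⟨(a+1) % n, Nat.mod_lt _ ((Nat.zero_le a).trans_lt ha)⟩ = true)) :
    LucasPred n v := by
  intro p q hpq
  have hq : q = ⟨((p:ℕ)+1) % n, Nat.mod_lt _ ((Nat.zero_le _).trans_lt p.2)⟩ := Fin.ext hpq
  rw [hq]
  exact H (p:ℕ) p.2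

lemma lucasPred_shift {n : ℕ} (v : Fin n → Bool) (h : LucasPred n v) (c : Fin n) :
    LucasPred n (fun j => v (j + c)) := by
  apply lucasPred_of
  intro a ha
  exact h (⟨a, ha⟩ + c) (⟨(a+1) % n, Nat.mod_lt _ ((Nat.zero_le a).trans_lt ha)⟩ + c) (by
    rw [Fin.val_add, Fin.val_add]
    show ((a+1) % n + (c:ℕ)) % n = ((a + (c:ℕ)) % n + 1) % n
    rw [Nat.mod_add_mod, Nat.mod_add_mod]
    have he : a + 1 + (c:ℕ) = a + (c:ℕ) + 1 := by omega
    rw [he])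

lemma rotCount (n : ℕ) [NeZero n] (i : Fin n) :
    ((univ : Finset (LucasV n)).filter (fun v => v.1 i = true)).card
    = ((univ : Finset (LucasV n)).filter (fun v => v.1 0 = true)).card := by
  apply Finset.card_nbij'
    (i := fun v => (⟨fun j => v.1 (j + i), lucasPred_shift v.1 v.2 i⟩ : LucasV n))
    (j := fun v => (⟨fun j => v.1 (j + (-i)), lucasPred_shift v.1 v.2 (-i)⟩ : LucasV n))
  · intro v hv
    simp only [Finset.mem_coe, Finset.mem_filter, Finset.mem_univ, true_and] at hv ⊢
    refine Finset.mem_coe.2 (Finset.mem_filter.2 ⟨Finset.mem_univ _, ?_⟩)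
    replace hv := (Finset.mem_filter.1 (Finset.mem_coe.1 hv)).2
    show v.1 (0 + i) = true
    rwa [zero_add]
  · intro v hv
    simp only [Finset.mem_coe, Finset.mem_filter, Finset.mem_univ, true_and] at hv ⊢
    refine Finset.mem_coe.2 (Finset.mem_filter.2 ⟨Finset.mem_univ _, ?_⟩)
    replace hv := (Finset.mem_filter.1 (Finset.mem_coe.1 hv)).2
    show v.1 (i + -i) = true
    rw [add_neg_cancel]
    exact hv
  · intro v _
    apply Subtype.ext; funext j
    show v.1 ((j + -i) + i) = v.1 j
    rw [add_assoc, neg_add_cancel, add_zero]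
  · intro v _
    apply Subtype.ext; funext j
    show v.1 ((j + i) + -i) = v.1 j
    rw [add_assoc, add_neg_cancel, add_zero]

lemma pairCard (n : ℕ) [NeZero n] :
    ((univ : Finset (Fin n × LucasV n)).filter (fun p => p.2.1 p.1 = true)).card
    = n * ((univ : Finset (LucasV n)).filter (fun v => v.1 0 = true)).card := by
  rw [Finset.card_filter, Fintype.sum_prod_type]
  calc ∑ i : Fin n, ∑ v : LucasV n, (if v.1 i = true then 1 else 0)
      = ∑ _i : Fin n, ((univ : Finset (LucasV n)).filter (fun v => v.1 0 = true)).card := by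
        refine Finset.sum_congr rfl fun i _ => ?_
        rw [← Finset.card_filter, rotCount]
    _ = n * ((univ : Finset (LucasV n)).filter (fun v => v.1 0 = true)).card := by
        rw [Finset.sum_const, Finset.card_univ, Fintype.card_fin, smul_eq_mul]
def lucasEmb (n : ℕ) (w : Fin (n-3) → Bool) : Fin n → Bool := fun i =>
  if h : 2 ≤ (i:ℕ) ∧ (i:ℕ) < n-1 then w ⟨(i:ℕ)-2, by omega⟩
  else if (i:ℕ) = 0 then true else false

lemma lucasEmb_out (n : ℕ) (w : Fin (n-3) → Bool) (a : ℕ) (ha : a < n)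
    (hc : ¬(2 ≤ a ∧ a < n-1)) :
    lucasEmb n w ⟨a, ha⟩ = if a = 0 then true else false := by
  unfold lucasEmb
  exact dif_neg hc

lemma lucasEmb_in (n : ℕ) (w : Fin (n-3) → Bool) (a : ℕ) (ha : a < n)
    (hc : 2 ≤ a ∧ a < n-1) (h2 : a - 2 < n-3) :
    lucasEmb n w ⟨a, ha⟩ = w ⟨a-2, h2⟩ := by
  unfold lucasEmb
  exact dif_pos hc

lemma lucasCount (n : ℕ) [NeZero n] (hn3 : 3 ≤ n) :
    ((univ : Finset (LucasV n)).filter (fun v => v.1 0 = true)).card = Nat.fib (n-1) := by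
  have hle : n - 3 + 2 ≤ n := by omega
  have h0v : ((0 : Fin n) : ℕ) = 0 := by simp
  have h0n : (0:ℕ) < n := by omega
  have h1n : (1:ℕ) < n := by omega
  have hn1 : n - 1 < n := by omega
  have h0fin : (0 : Fin n) = ⟨0, h0n⟩ := Fin.ext h0v
  have force1 : ∀ u : LucasV n, u.1 0 = true → u.1 ⟨1, h1n⟩ = false := by
    intro u hu
    have hrel : ((⟨1, h1n⟩ : Fin n) : ℕ) = (((0:Fin n):ℕ) + 1) % n := by
      rw [h0v]
      exact (Nat.mod_eq_of_lt h1n).symm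
    have hcon := u.2 0 ⟨1, h1n⟩ hrel
    cases hb : u.1 ⟨1, h1n⟩
    · rfl
    · exact absurd ⟨hu, hb⟩ hcon
  have forceLast : ∀ u : LucasV n, u.1 0 = true → u.1 ⟨n-1, hn1⟩ = false := by
    intro u hu
    have hrel : ((0:Fin n) : ℕ) = (((⟨n-1, hn1⟩ : Fin n):ℕ) + 1) % n := by
      rw [h0v]
      show (0:ℕ) = (n-1+1) % n
      rw [show n-1+1 = n by omega, Nat.mod_self]
    have hcon := u.2 ⟨n-1, hn1⟩ 0 hrel
    cases hb : u.1 ⟨n-1, hn1⟩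
    · rfl
    · exact absurd ⟨hb, hu⟩ hcon
  have key : ((univ : Finset (LucasV n)).filter (fun v => v.1 0 = true)).card
      = ((univ : Finset (Fin (n-3) → Bool)).filter (FibPred (n-3))).card := by
    apply Finset.card_bij
      (i := fun v _ => (fun j : Fin (n-3) => v.1 (Fin.castLE hle (j.addNat 2))))
    · intro v hv
      simp only [Finset.mem_coe, Finset.mem_filter, Finset.mem_univ, true_and] at hv ⊢
      rw [fibPred_iff]
      intro a ha
      have h1 : a + 2 < n := by omega
      have h2 : a + 3 < n := by omega
      rintro ⟨hA, hB⟩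
      have hA' : v.1 ⟨a+2, h1⟩ = true := hA
      have hB' : v.1 ⟨a+3, h2⟩ = true := hB
      exact v.2 ⟨a+2, h1⟩ ⟨a+3, h2⟩
        (show a+3 = (a+2+1) % n by rw [Nat.mod_eq_of_lt (show a+2+1 < n by omega)])
        ⟨hA', hB'⟩
    · intro v hv v' hv' h
      simp only [Finset.mem_filter, Finset.mem_univ, true_and] at hv hv'
      apply Subtype.ext; funext idx
      by_cases hA : (idx:ℕ) = 0
      · have hix : idx = 0 := Fin.ext (by rw [h0v]; exact hA)
        rw [hix, hv, hv']
      · by_cases hB : (idx:ℕ) = 1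
        · have hix : idx = ⟨1, h1n⟩ := Fin.ext hB
          rw [hix, force1 v hv, force1 v' hv']
        · by_cases hC : (idx:ℕ) = n-1
          · have hix : idx = ⟨n-1, hn1⟩ := Fin.ext hC
            rw [hix, forceLast v hv, forceLast v' hv']
          · have hmid : (idx:ℕ) - 2 < n - 3 := by
              have := idx.2
              omega
            have h3 : v.1 (Fin.castLE hle ((⟨(idx:ℕ)-2, hmid⟩ : Fin (n-3)).addNat 2))
                = v'.1 (Fin.castLE hle ((⟨(idx:ℕ)-2, hmid⟩ : Fin (n-3)).addNat 2)) :=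
              congrFun h ⟨(idx:ℕ)-2, hmid⟩
            have hidx : Fin.castLE hle ((⟨(idx:ℕ)-2, hmid⟩ : Fin (n-3)).addNat 2) = idx :=
              Fin.ext (show (idx:ℕ) - 2 + 2 = (idx:ℕ) by omega)
            rwa [hidx] at h3
    · intro w hw
      simp only [Finset.mem_filter, Finset.mem_univ, true_and] at hw
      have hluc : LucasPred n (lucasEmb n w) := by
        apply lucasPred_of
        intro a ha
        rintro ⟨hA, hB⟩
        have hbn : (a+1) % n < n := Nat.mod_lt _ h0n
        by_cases ha0 : a = 0
        · subst ha0
          have hfin : (⟨(0+1) % n, hbn⟩ : Fin n) = ⟨1, h1n⟩ :=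
            Fin.ext (Nat.mod_eq_of_lt h1n)
          rw [show (⟨(0+1) % n, Nat.mod_lt _ ((Nat.zero_le 0).trans_lt ha)⟩ : Fin n)
              = ⟨1, h1n⟩ from Fin.ext (Nat.mod_eq_of_lt h1n)] at hB
          rw [lucasEmb_out n w 1 h1n (by omega), if_neg one_ne_zero] at hB
          exact Bool.false_ne_true hB
        · by_cases ha1 : a = 1
          · subst ha1
            rw [lucasEmb_out n w 1 h1n (by omega), if_neg one_ne_zero] at hA
            exact Bool.false_ne_true hA
          · by_cases haL : a = n-1
            · subst haL
              rw [lucasEmb_out n w (n-1) hn1 (by omega),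
                if_neg (show ¬((n-1:ℕ) = 0) by omega)] at hA
              exact Bool.false_ne_true hA
            · by_cases haM : a = n-2
              · subst haM
                rw [show (⟨(n-2+1) % n, Nat.mod_lt _ ((Nat.zero_le (n-2)).trans_lt ha)⟩ : Fin n)
                    = ⟨n-1, hn1⟩ from Fin.ext (by
                      show (n-2+1) % n = n-1
                      rw [show n-2+1 = n-1 by omega, Nat.mod_eq_of_lt hn1])] at hB
                rw [lucasEmb_out n w (n-1) hn1 (by omega),
                  if_neg (show ¬((n-1:ℕ) = 0) by omega)] at hB
                exact Bool.false_ne_true hB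
              · have haR : 2 ≤ a ∧ a < n - 2 := by omega
                have ha1n : a + 1 < n := by omega
                rw [show (⟨(a+1) % n, Nat.mod_lt _ ((Nat.zero_le a).trans_lt ha)⟩ : Fin n)
                    = ⟨a+1, ha1n⟩ from Fin.ext (Nat.mod_eq_of_lt ha1n)] at hB
                rw [lucasEmb_in n w a ha (by omega) (by omega)] at hA
                rw [lucasEmb_in n w (a+1) ha1n (by omega) (by omega)] at hB
                have hB'' : w ⟨a-2+1, by omega⟩ = true := by
                  rw [show (⟨a-2+1, by omega⟩ : Fin (n-3)) = ⟨a+1-2, by omega⟩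
                    from Fin.ext (show a-2+1 = a+1-2 by omega)]
                  exact hB
                exact (fibPred_iff _ _).1 hw (a-2) (by omega) ⟨hA, hB''⟩
      refine ⟨⟨lucasEmb n w, hluc⟩, ?_, ?_⟩
      · refine Finset.mem_filter.2 ⟨Finset.mem_univ _, ?_⟩
        show lucasEmb n w 0 = true
        rw [h0fin, lucasEmb_out n w 0 h0n (by omega), if_pos rfl]
      · funext j
        have hj2 : (j:ℕ) + 2 < n := by
          have := j.2
          omega
        have hfin : Fin.castLE hle (j.addNat 2) = ⟨(j:ℕ)+2, hj2⟩ := Fin.ext rfl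
        show lucasEmb n w (Fin.castLE hle (j.addNat 2)) = w j
        rw [hfin, lucasEmb_in n w ((j:ℕ)+2) hj2 (by have := j.2; omega)
          (by have := j.2; omega)]
        exact congrArg w (Fin.ext (show (j:ℕ)+2-2 = (j:ℕ) by omega))
  rw [key, fibCount (n-3), show n-3+2 = n-1 by omega]
lemma flip_lucas {n : ℕ} (v : Fin n → Bool) (hv : LucasPred n v) (i : Fin n) :
    LucasPred n (Function.update v i false) := by
  intro a b hab
  rintro ⟨ha, hb⟩
  by_cases hai : a = i
  · rw [hai, Function.update_self] at ha
    exact Bool.false_ne_true ha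
  · rw [Function.update_of_ne hai] at ha
    by_cases hbi : b = i
    · rw [hbi, Function.update_self] at hb
      exact Bool.false_ne_true hb
    · rw [Function.update_of_ne hbi] at hb
      exact hv a b hab ⟨ha, hb⟩

lemma diff_update {n : ℕ} (v : Fin n → Bool) (i : Fin n) (hvi : v i = true) :
    diffCount v (Function.update v i false) = 1 := by
  unfold diffCount
  have hset : (Finset.univ.filter fun j => v j ≠ Function.update v i false j) = {i} := by
    ext j
    simp only [Finset.mem_filter, Finset.mem_univ, true_and, Finset.mem_singleton]
    constructor
    · intro hj
      by_contra hne
      rw [Function.update_of_ne hne] at hj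
      exact hj rfl
    · intro hj
      subst hj
      rw [Function.update_self, hvi]
      simp
  rw [hset]
  exact Finset.card_singleton i

lemma edgeCard (n : ℕ) :
    ((univ : Finset (Fin n × LucasV n)).filter (fun p => p.2.1 p.1 = true)).card
    = (lucasCube n).edgeFinset.card := by
  apply Finset.card_bij (i := fun p hp =>
    (s(p.2, (⟨Function.update p.2.1 p.1 false,
      flip_lucas p.2.1 p.2.2 p.1⟩ : LucasV n)) : Sym2 (LucasV n)))
  · intro p hp
    refine SimpleGraph.mem_edgeFinset.2 ?_
    show diffCount p.2.1 _ = 1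
    exact diff_update p.2.1 p.1 (Finset.mem_filter.1 hp).2
  · intro p hp q hq h
    have hp' : p.2.1 p.1 = true := (Finset.mem_filter.1 hp).2
    have hq' : q.2.1 q.1 = true := (Finset.mem_filter.1 hq).2
    replace h := Sym2.eq_iff.1 h
    rcases h with ⟨h1, h2⟩ | ⟨h1, h2⟩
    · -- p.2 = q.2 and flips equal
      have hfun : Function.update p.2.1 p.1 false = Function.update q.2.1 q.1 false :=
        congrArg Subtype.val h2
      have hval : p.2.1 = q.2.1 := congrArg Subtype.val h1
      have hii : p.1 = q.1 := by
        by_contra hne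
        have hcf := congrFun hfun p.1
        rw [Function.update_self, Function.update_of_ne hne] at hcf
        rw [← hval, hp'] at hcf
        exact Bool.false_ne_true hcf
      exact Prod.ext hii h1
    · -- impossible case
      exfalso
      have hfun : q.2.1 = Function.update p.2.1 p.1 false := (congrArg Subtype.val h2).symm
      have hfun' : p.2.1 = Function.update q.2.1 q.1 false := congrArg Subtype.val h1
      by_cases hqp : q.1 = p.1
      · have hcf := congrFun hfun q.1
        rw [hqp, Function.update_self] at hcf
        rw [hqp] at hq'
        rw [hcf] at hq'
        exact Bool.false_ne_true hq'
      · have h5 := congrFun hfun q.1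
        rw [Function.update_of_ne hqp] at h5
        have h6 := congrFun hfun' q.1
        rw [Function.update_self] at h6
        rw [h5, h6] at hq'
        exact Bool.false_ne_true hq'
  · rintro e he
    induction e using Sym2.ind with
    | _ u v =>
      replace he := SimpleGraph.mem_edgeFinset.1 he
      have he' : (Finset.univ.filter fun j => u.1 j ≠ v.1 j).card = 1 := he
      obtain ⟨i, hi⟩ := Finset.card_eq_one.1 he'
      have hne : u.1 i ≠ v.1 i := by
        have hmem : i ∈ ({i} : Finset (Fin n)) := Finset.mem_singleton_self i
        rw [← hi] at hmem
        exact (Finset.mem_filter.1 hmem).2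
      have hagree : ∀ j, j ≠ i → u.1 j = v.1 j := by
        intro j hj
        by_contra hne'
        have : j ∈ Finset.univ.filter fun j => u.1 j ≠ v.1 j :=
          Finset.mem_filter.2 ⟨Finset.mem_univ _, hne'⟩
        rw [hi] at this
        exact hj (Finset.mem_singleton.1 this)
      by_cases hui : u.1 i = true
      · refine ⟨(i, u), Finset.mem_filter.2 ⟨Finset.mem_univ _, hui⟩, ?_⟩
        have hvv : (⟨Function.update u.1 i false, flip_lucas u.1 u.2 i⟩ : LucasV n) = v := by
          apply Subtype.ext
          funext j
          show Function.update u.1 i false j = v.1 j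
          by_cases hj : j = i
          · subst hj
            rw [Function.update_self]
            cases hv' : v.1 j
            · rfl
            · exact absurd (hui.trans hv'.symm) hne
          · rw [Function.update_of_ne hj]
            exact hagree j hj
        rw [hvv]
      · have hui' : u.1 i = false := by
          cases h : u.1 i
          · rfl
          · exact absurd h hui
        have hvi : v.1 i = true := by
          cases hv' : v.1 i
          · exact absurd (hui'.trans hv'.symm) hne
          · rfl
        refine ⟨(i, v), Finset.mem_filter.2 ⟨Finset.mem_univ _, hvi⟩, ?_⟩
        have huu : (⟨Function.update v.1 i false, flip_lucas v.1 v.2 i⟩ : LucasV n) = u := by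
          apply Subtype.ext
          funext j
          show Function.update v.1 i false j = u.1 j
          by_cases hj : j = i
          · subst hj
            rw [Function.update_self, hui']
          · rw [Function.update_of_ne hj]
            exact (hagree j hj).symm
        rw [huu]
        exact Sym2.eq_swap
/-- The number of edges of the Lucas cube Λ_n equals nF_{n-1} for n ≥ 1. -/
theorem card_edges_lucasCube (n : ℕ) (hn : 1 ≤ n) :
    (lucasCube n).edgeFinset.card = n * Nat.fib (n - 1) := by
  rcases n with _ | _ | _ | m
  · omega
  · decide
  · decide
  · haveI : NeZero (m+3) := ⟨by omega⟩
    rw [← edgeCard, pairCard, lucasCount (m+3) (by omega)]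
end

section
/- The average degree of the Fibonacci cube Γ_n, divided by n, converges to (5−√5)/5 as n → ∞. -/
open Finset

lemma fibPred_cons_false {n : ℕ} (v : Fin n → Bool) :
    FibPred (n+1) (Fin.cons false v) ↔ FibPred n v := by
  constructor
  · intro h i j hj
    have := h i.succ j.succ (by simpa using hj)
    simpa using this
  · intro h i j hj
    rcases Fin.eq_zero_or_eq_succ j with rfl | ⟨k, rfl⟩
    · simp at hj
    rcases Fin.eq_zero_or_eq_succ i with rfl | ⟨m, rfl⟩
    · simp
    · simp only [Fin.cons_succ]
      exact h m k (by simpa using hj)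

lemma fibPred_cons_true {n : ℕ} (w : Fin (n+1) → Bool) :
    FibPred (n+2) (Fin.cons true w) ↔ FibPred (n+1) w ∧ w 0 = false := by
  constructor
  · intro h
    refine ⟨fun i j hj => by simpa using h i.succ j.succ (by simpa using hj), ?_⟩
    have := h 0 1 (by simp)
    simp only [Fin.cons_zero] at this
    have h1 : (1 : Fin (n+2)) = (0 : Fin (n+1)).succ := rfl
    rw [h1, Fin.cons_succ] at this
    simpa using this
  · rintro ⟨h, h0⟩ i j hj
    rcases Fin.eq_zero_or_eq_succ j with rfl | ⟨k, rfl⟩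
    · simp at hj
    rcases Fin.eq_zero_or_eq_succ i with rfl | ⟨m, rfl⟩
    · have : (k : ℕ) = 0 := by simpa using hj
      have : k = 0 := by ext; simpa
      subst this
      simp [h0]
    · simp only [Fin.cons_succ]
      exact h m k (by simpa using hj)

lemma diffCount_cons {n : ℕ} (a b : Bool) (u v : Fin n → Bool) :
    diffCount (Fin.cons a u) (Fin.cons b v) = (if a = b then 0 else 1) + diffCount u v := by
  unfold diffCount
  rw [Finset.card_filter, Finset.card_filter, Fin.sum_univ_succ]
  simp [Fin.cons_succ, Fin.cons_zero]

lemma diffCount_eq_zero {n : ℕ} (u v : Fin n → Bool) :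
    diffCount u v = 0 ↔ u = v := by
  unfold diffCount
  rw [Finset.card_eq_zero, Finset.filter_eq_empty_iff]
  constructor
  · intro h; funext i; have := h (Finset.mem_univ i); simpa using this
  · intro h i _; simp [h]


/-- decomposition map -/
def fibMap (n : ℕ) : FibV (n+1) ⊕ FibV n → FibV (n+2)
  | Sum.inl s => ⟨Fin.cons false s.1, (fibPred_cons_false s.1).2 s.2⟩
  | Sum.inr t => ⟨Fin.cons true (Fin.cons false t.1),
      (fibPred_cons_true _).2 ⟨(fibPred_cons_false t.1).2 t.2, by simp⟩⟩

lemma fibMap_bijective (n : ℕ) : Function.Bijective (fibMap n) := by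
  constructor
  · rintro (s | t) (s' | t') h <;>
      have hval := congrArg Subtype.val h <;> simp only [fibMap] at hval
    · have hh : s.1 = s'.1 := by
        funext i; have := congrFun hval i.succ; simpa using this
      simp [Subtype.ext hh]
    · have := congrFun hval 0; simp at this
    · have := congrFun hval 0; simp at this
    · have hh : t.1 = t'.1 := by
        funext i; have := congrFun hval i.succ.succ; simpa using this
      simp [Subtype.ext hh]
  · rintro ⟨v, hv⟩
    rcases hb : v 0 with _ | _
    · refine ⟨Sum.inl ⟨Fin.tail v, ?_⟩, ?_⟩
      · have : FibPred (n+2) (Fin.cons false (Fin.tail v)) := by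
          rw [show Fin.cons false (Fin.tail v) = v by
            rw [← hb]; exact Fin.cons_self_tail v]
          exact hv
        exact (fibPred_cons_false _).1 this
      · simp only [fibMap]
        congr 1
        rw [← hb]; exact Fin.cons_self_tail v
    · have hv' : FibPred (n+2) (Fin.cons true (Fin.tail v)) := by
        rw [show Fin.cons true (Fin.tail v) = v by rw [← hb]; exact Fin.cons_self_tail v]
        exact hv
      obtain ⟨h1, h2⟩ := (fibPred_cons_true _).1 hv'
      refine ⟨Sum.inr ⟨Fin.tail (Fin.tail v), (fibPred_cons_false _).1 ?_⟩, ?_⟩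
      · rw [show Fin.cons false (Fin.tail (Fin.tail v)) = Fin.tail v by
          rw [← h2]; exact Fin.cons_self_tail _]
        exact h1
      · simp only [fibMap]
        congr 1
        rw [show Fin.cons false (Fin.tail (Fin.tail v)) = Fin.tail v by
          rw [← h2]; exact Fin.cons_self_tail _]
        rw [← hb]; exact Fin.cons_self_tail v

lemma card_fibV_rec (n : ℕ) :
    Fintype.card (FibV (n+2)) = Fintype.card (FibV (n+1)) + Fintype.card (FibV n) := by
  rw [← Fintype.card_of_bijective (fibMap_bijective n), Fintype.card_sum]

lemma card_fibV (n : ℕ) : Fintype.card (FibV n) = Nat.fib (n+2) := by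
  have key : ∀ m, Fintype.card (FibV m) = Nat.fib (m+2) ∧
      Fintype.card (FibV (m+1)) = Nat.fib (m+3) := by
    intro m
    induction m with
    | zero =>
      constructor <;> decide
    | succ k ih =>
      refine ⟨ih.2, ?_⟩
      rw [card_fibV_rec, ih.1, ih.2]
      have h1 : Nat.fib (k+1+3) = Nat.fib (k+2) + Nat.fib (k+3) := by
        rw [show k+1+3 = (k+2)+2 from rfl, Nat.fib_add_two]
      omega
  exact (key n).1

lemma degree_eq_sum {n : ℕ} (u : FibV n) :
    (fibCube n).degree u = ∑ v : FibV n, if (fibCube n).Adj u v then 1 else 0 := by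
  rw [← SimpleGraph.card_neighborFinset_eq_degree, SimpleGraph.neighborFinset_eq_filter,
    Finset.card_filter]

lemma adj_ll {n : ℕ} (s s' : FibV (n+1)) :
    (fibCube (n+2)).Adj (fibMap n (Sum.inl s)) (fibMap n (Sum.inl s'))
      ↔ (fibCube (n+1)).Adj s s' := by
  show diffCount _ _ = 1 ↔ _
  simp only [fibMap]
  rw [diffCount_cons]
  simp [SimpleGraph.Adj, fibCube]

lemma adj_rr {n : ℕ} (t t' : FibV n) :
    (fibCube (n+2)).Adj (fibMap n (Sum.inr t)) (fibMap n (Sum.inr t'))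
      ↔ (fibCube n).Adj t t' := by
  show diffCount _ _ = 1 ↔ _
  simp only [fibMap]
  rw [diffCount_cons, diffCount_cons]
  simp [SimpleGraph.Adj, fibCube]

lemma adj_lr {n : ℕ} (s : FibV (n+1)) (t : FibV n) :
    (fibCube (n+2)).Adj (fibMap n (Sum.inl s)) (fibMap n (Sum.inr t))
      ↔ s.1 = Fin.cons false t.1 := by
  show diffCount _ _ = 1 ↔ _
  simp only [fibMap]
  rw [diffCount_cons]
  simp only [if_neg (by simp : ¬ (false = true))]
  constructor
  · intro h
    exact (diffCount_eq_zero _ _).1 (by omega)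
  · intro h
    rw [(diffCount_eq_zero _ _).2 h]


def liftF {n : ℕ} (t : FibV n) : FibV (n+1) :=
  ⟨Fin.cons false t.1, (fibPred_cons_false t.1).2 t.2⟩

lemma val_eq_cons_iff {n : ℕ} (s : FibV (n+1)) (t : FibV n) :
    s.1 = Fin.cons false t.1 ↔ s = liftF t :=
  ⟨fun h => Subtype.ext h, fun h => congrArg Subtype.val h⟩

lemma cross_sum (n : ℕ) :
    (∑ t : FibV n, ∑ s : FibV (n+1), if s.1 = Fin.cons false t.1 then (1:ℕ) else 0)
      = Fintype.card (FibV n) := by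
  calc (∑ t : FibV n, ∑ s : FibV (n+1), if s.1 = Fin.cons false t.1 then (1:ℕ) else 0)
      = ∑ _t : FibV n, 1 := by
        refine Finset.sum_congr rfl fun t _ => ?_
        simp only [val_eq_cons_iff]
        rw [Finset.sum_ite_eq' Finset.univ (liftF t) (fun _ => (1:ℕ))]
        simp
    _ = Fintype.card (FibV n) := Fintype.card_eq_sum_ones.symm

set_option maxHeartbeats 1000000 in
lemma degSum_rec (n : ℕ) :
    (∑ u : FibV (n+2), (fibCube (n+2)).degree u)
      = (∑ u : FibV (n+1), (fibCube (n+1)).degree u)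
        + (∑ u : FibV n, (fibCube n).degree u) + 2 * Fintype.card (FibV n) := by
  have h0 : ∀ x, (fibCube (n+2)).degree (fibMap n x)
      = ∑ y : FibV (n+1) ⊕ FibV n,
          if (fibCube (n+2)).Adj (fibMap n x) (fibMap n y) then 1 else 0 := by
    intro x
    rw [degree_eq_sum]
    exact (Fintype.sum_bijective (fibMap n) (fibMap_bijective n) _ _ fun y => rfl).symm
  have expand : (∑ u : FibV (n+2), (fibCube (n+2)).degree u)
      = ∑ x : FibV (n+1) ⊕ FibV n, ∑ y : FibV (n+1) ⊕ FibV n,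
          if (fibCube (n+2)).Adj (fibMap n x) (fibMap n y) then 1 else 0 := by
    rw [← (Fintype.sum_bijective (fibMap n) (fibMap_bijective n)
      (fun x => (fibCube (n+2)).degree (fibMap n x)) _ fun x => rfl)]
    exact Finset.sum_congr rfl fun x _ => h0 x
  rw [expand, Fintype.sum_sum_type]
  have h1 : ∀ s : FibV (n+1),
      (∑ y : FibV (n+1) ⊕ FibV n,
        if (fibCube (n+2)).Adj (fibMap n (Sum.inl s)) (fibMap n y) then 1 else 0)
      = (∑ s' : FibV (n+1), if (fibCube (n+1)).Adj s s' then 1 else 0)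
        + ∑ t : FibV n, if s.1 = Fin.cons false t.1 then 1 else 0 := by
    intro s
    rw [Fintype.sum_sum_type]
    exact congrArg₂ (· + ·)
      (Finset.sum_congr rfl fun s' _ => by simp only [adj_ll])
      (Finset.sum_congr rfl fun t _ => by simp only [adj_lr])
  have h2 : ∀ t : FibV n,
      (∑ y : FibV (n+1) ⊕ FibV n,
        if (fibCube (n+2)).Adj (fibMap n (Sum.inr t)) (fibMap n y) then 1 else 0)
      = (∑ s : FibV (n+1), if s.1 = Fin.cons false t.1 then 1 else 0)
        + ∑ t' : FibV n, if (fibCube n).Adj t t' then 1 else 0 := by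
    intro t
    rw [Fintype.sum_sum_type]
    refine congrArg₂ (· + ·)
      (Finset.sum_congr rfl fun s _ => ?_)
      (Finset.sum_congr rfl fun t' _ => by simp only [adj_rr])
    have hiff : (fibCube (n+2)).Adj (fibMap n (Sum.inr t)) (fibMap n (Sum.inl s))
        ↔ s.1 = Fin.cons false t.1 :=
      ⟨fun h => (adj_lr s t).1 h.symm, fun h => ((adj_lr s t).2 h).symm⟩
    simp only [hiff]
  rw [Finset.sum_congr rfl fun s _ => h1 s, Finset.sum_congr rfl fun t _ => h2 t,
    Finset.sum_add_distrib, Finset.sum_add_distrib]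
  have e1 : (∑ s : FibV (n+1), ∑ s' : FibV (n+1),
      if (fibCube (n+1)).Adj s s' then (1:ℕ) else 0)
      = ∑ u : FibV (n+1), (fibCube (n+1)).degree u :=
    Finset.sum_congr rfl fun s _ => (degree_eq_sum s).symm
  have e2 : (∑ t : FibV n, ∑ t' : FibV n,
      if (fibCube n).Adj t t' then (1:ℕ) else 0)
      = ∑ u : FibV n, (fibCube n).degree u :=
    Finset.sum_congr rfl fun t _ => (degree_eq_sum t).symm
  have e3 := cross_sum n
  have e4 := cross_sum n
  rw [Finset.sum_comm] at e4
  rw [e1, e2]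
  omega

lemma degSum_zero : (∑ u : FibV 0, (fibCube 0).degree u) = 0 := by decide
lemma degSum_one : (∑ u : FibV 1, (fibCube 1).degree u) = 2 := by decide

lemma degSum_closed (n : ℕ) :
    5 * (∑ u : FibV n, (fibCube n).degree u)
      = 2 * n * Nat.fib (n+1) + 4 * (n+1) * Nat.fib n := by
  have key : ∀ m, (5 * (∑ u : FibV m, (fibCube m).degree u)
        = 2 * m * Nat.fib (m+1) + 4 * (m+1) * Nat.fib m) ∧
      (5 * (∑ u : FibV (m+1), (fibCube (m+1)).degree u)
        = 2 * (m+1) * Nat.fib (m+2) + 4 * (m+2) * Nat.fib (m+1)) := by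
    intro m
    induction m with
    | zero => refine ⟨by rw [degSum_zero]; simp, by rw [degSum_one]; simp [Nat.fib]⟩
    | succ k ih =>
      refine ⟨ih.2, ?_⟩
      rw [degSum_rec, card_fibV, Nat.mul_add, Nat.mul_add, ih.1, ih.2]
      have hf2 : Nat.fib (k+2) = Nat.fib k + Nat.fib (k+1) := Nat.fib_add_two
      have hf3 : Nat.fib (k+3) = Nat.fib (k+1) + Nat.fib (k+2) :=
        Nat.fib_add_two (n := k+1)
      rw [show k+1+1 = k+2 from rfl, show k+1+2 = k+3 from rfl, hf3, hf2]
      ring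
  exact (key n).1

open Filter Real goldenRatio in
lemma fib_div_gold_pow_tendsto :
    Tendsto (fun n : ℕ => (Nat.fib n : ℝ) / φ ^ n) atTop (nhds (1/√5)) := by
  have h5 : (0:ℝ) < √5 := Real.sqrt_pos.mpr (by norm_num)
  have hψ : |ψ| < 1 := abs_lt.2 ⟨neg_one_lt_goldenConj, goldenConj_neg.trans one_pos⟩
  have hratio : |ψ/φ| < 1 := by
    rw [abs_div, abs_of_pos goldenRatio_pos, div_lt_one goldenRatio_pos]
    exact hψ.trans one_lt_goldenRatio
  have h0 : Tendsto (fun n : ℕ => (ψ/φ)^n) atTop (nhds 0) :=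
    tendsto_pow_atTop_nhds_zero_of_abs_lt_one hratio
  have key : Tendsto (fun n : ℕ => (1 - (ψ/φ)^n)/√5) atTop (nhds ((1 - 0)/√5)) :=
    (tendsto_const_nhds.sub h0).div_const _
  rw [sub_zero] at key
  refine key.congr fun n => ?_
  rw [Real.coe_fib_eq, div_pow]
  have hφ : (φ:ℝ)^n ≠ 0 := pow_ne_zero _ goldenRatio_ne_zero
  field_simp

lemma div_aux {a b p q r : ℝ} (hb : b ≠ 0) (hp : p ≠ 0) (hq : q ≠ 0) (hr : r ≠ 0)
    (h : p * r = q) : a/p/(b/q)/r = a/b := by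
  subst h; field_simp

open Filter Real goldenRatio in
lemma fib_ratio_tendsto (k : ℕ) :
    Tendsto (fun n : ℕ => (Nat.fib (n+k) : ℝ) / (Nat.fib (n+2))) atTop
      (nhds (1/φ^(2-k:ℤ))) := by
  have h5 : (1/√5 : ℝ) ≠ 0 := by
    simp only [ne_eq, one_div, inv_eq_zero]
    exact ne_of_gt (Real.sqrt_pos.mpr (by norm_num))
  have ta : ∀ j : ℕ, Tendsto (fun n : ℕ => (Nat.fib (n+j) : ℝ) / φ ^ (n+j)) atTop
      (nhds (1/√5)) := fun j =>
    fib_div_gold_pow_tendsto.comp (tendsto_add_atTop_nat j)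
  have hdiv : Tendsto (fun n : ℕ =>
      ((Nat.fib (n+k) : ℝ) / φ ^ (n+k)) / ((Nat.fib (n+2) : ℝ) / φ ^ (n+2))) atTop
      (nhds ((1/√5)/(1/√5))) := (ta k).div (ta 2) h5
  rw [div_self h5] at hdiv
  have hT := hdiv.div_const (φ^(2-k:ℤ))
  rw [one_div] at hT ⊢
  refine hT.congr fun n => ?_
  have hfz : ((Nat.fib (n+2):ℝ)) ≠ 0 :=
    ne_of_gt (by exact_mod_cast Nat.cast_pos.mpr (Nat.fib_pos.mpr (by omega)))
  have hkey : (φ:ℝ)^(n+k) * φ^(2-k:ℤ) = φ^(n+2) := by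
    have h1 : ((φ:ℝ)^(n+k)) = φ^((n:ℤ)+k) := by rw [← zpow_natCast]; norm_num
    have h2 : ((φ:ℝ)^(n+2)) = φ^((n:ℤ)+2) := by rw [← zpow_natCast]; norm_num
    rw [h1, h2, ← zpow_add₀ goldenRatio_ne_zero]
    ring_nf
  exact div_aux hfz (pow_ne_zero _ goldenRatio_ne_zero) (pow_ne_zero _ goldenRatio_ne_zero)
    (zpow_ne_zero _ goldenRatio_ne_zero) hkey


open Filter Real goldenRatio in
/-- The average degree of Γ_n, divided by n, converges to (5-√5)/5. -/
theorem avg_deg_fibCube_tendsto :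
    Filter.Tendsto
      (fun n : ℕ =>
        ((∑ u : FibV n, (fibCube n).degree u : ℕ) : ℝ) / (Fintype.card (FibV n)) / n)
      Filter.atTop (nhds ((5 - Real.sqrt 5) / 5)) := by
  have r1 := fib_ratio_tendsto 1
  have r2 := fib_ratio_tendsto 0
  have Tzero : Tendsto (fun n : ℕ => (4:ℝ)/(5*n)) atTop (nhds 0) :=
    Tendsto.div_atTop tendsto_const_nhds
      (Tendsto.const_mul_atTop (by norm_num) tendsto_natCast_atTop_atTop)
  have T : Tendsto (fun n : ℕ =>
      (2/5) * ((Nat.fib (n+1) : ℝ) / (Nat.fib (n+2)))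
      + (4/5) * ((Nat.fib (n+0) : ℝ) / (Nat.fib (n+2)))
      + (4/(5*n)) * ((Nat.fib (n+0) : ℝ) / (Nat.fib (n+2)))) atTop
      (nhds ((2/5) * (1/φ^(2-1:ℤ)) + (4/5) * (1/φ^(2-0:ℤ)) + 0 * (1/φ^(2-0:ℤ)))) :=
    (((r1.const_mul (2/5)).add (r2.const_mul (4/5))).add (Tzero.mul r2))
  have hval : (2/5) * (1/φ^(2-1:ℤ)) + (4/5) * (1/φ^(2-0:ℤ)) + 0 * (1/φ^(2-0:ℤ))
      = (5 - Real.sqrt 5) / 5 := by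
    have h5 : Real.sqrt 5 * Real.sqrt 5 = 5 := Real.mul_self_sqrt (by norm_num)
    have h5pos : (0:ℝ) < Real.sqrt 5 := Real.sqrt_pos.mpr (by norm_num)
    have h1 : (1:ℝ) + Real.sqrt 5 ≠ 0 := by positivity
    norm_num [goldenRatio, zpow_two]
    field_simp
    linear_combination (√5 - 1) * h5
  rw [hval] at T
  refine Tendsto.congr' ?_ T
  filter_upwards [eventually_ge_atTop 1] with n hn
  have hD : (5:ℝ) * ((∑ u : FibV n, (fibCube n).degree u : ℕ) : ℝ)
      = 2*n*(Nat.fib (n+1):ℝ) + 4*(n+1)*(Nat.fib n:ℝ) := by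
    exact_mod_cast degSum_closed n
  have hcard : ((Fintype.card (FibV n) : ℕ) : ℝ) = (Nat.fib (n+2) : ℝ) := by
    exact_mod_cast card_fibV n
  have hz : ((Nat.fib (n+2):ℝ)) ≠ 0 :=
    ne_of_gt (by exact_mod_cast Nat.cast_pos.mpr (Nat.fib_pos.mpr (by omega)))
  have hn' : ((n:ℝ)) ≠ 0 := by
    have : (1:ℝ) ≤ n := by exact_mod_cast hn
    linarith
  rw [Nat.add_zero]
  set a : ℝ := ((∑ u : FibV n, (fibCube n).degree u : ℕ) : ℝ) with ha
  have hrw : a = (2*(n:ℝ)*(Nat.fib (n+1):ℝ) + 4*((n:ℝ)+1)*(Nat.fib n:ℝ))/5 := by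
    rw [eq_div_iff (by norm_num : (5:ℝ) ≠ 0)]
    linarith [hD]
  rw [hcard, hrw]
  field_simp
  ring
end
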